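/- Let M ≥ 1 and work in ℝ^M with the Euclidean inner product. Let F_1, …, F_N : ℝ^M → ℝ be differentiable functions such that each ∇F_n is L-Lipschitz and each F_n is μ-strongly convex (F_n − (μ/2)‖·‖² is convex), with 0 < μ ≤ L. Let p_1, …, p_N ≥ 0 with Σ_n p_n = 1, set F = Σ_n p_n F_n, and let ω* be a global minimizer of F. Let ω_1, …, ω_N ∈ ℝ^M, set ω̄ = Σ_n p_n ω_n and g_n = ∇F_n(ω_n). Then for any step size η with 0 < η < 1/(2L), ‖Σ_{n=1}^N p_n (ω_n − η g_n) − ω*‖² ≤ (1 − μη/2)·‖ω̄ − ω*‖² + (2η²L² + (L+μ)η)·Σ_{n=1}^N p_n ‖ω̄ − ω_n‖². -/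

import Mathlib

open Finset InnerProductSpace Set


local notation "⟪" x ", " y "⟫" => @inner ℝ _ _ x y

variable {E : Type*} [NormedAddCommGroup E] [InnerProductSpace ℝ E] [CompleteSpace E]

lemma line_hasDerivAt {f : E → ℝ} {G : E} {x v : E} {t : ℝ}
    (h : HasGradientAt f G (x + t • v)) :
    HasDerivAt (fun s : ℝ => f (x + s • v)) ⟪G, v⟫ t := by
  have hline : HasDerivAt (fun s : ℝ => x + s • v) v t := by
    simpa using ((hasDerivAt_id t).smul_const v).const_add x
  have := (h.hasFDerivAt).comp_hasDerivAt t hline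
  simpa [toDual_apply_apply, Function.comp_def] using this

lemma convex_first_order {f : E → ℝ} {G x : E} (hf : ConvexOn ℝ Set.univ f)
    (hx : HasGradientAt f G x) (y : E) : f x + ⟪G, y - x⟫ ≤ f y := by
  set v := y - x with hv
  have hx' : HasGradientAt f G (x + (0:ℝ) • v) := by simpa using hx
  have hd : HasDerivAt (fun s : ℝ => f (x + s • v)) ⟪G, v⟫ 0 := line_hasDerivAt hx'
  have hslope : Filter.Tendsto (slope (fun s : ℝ => f (x + s • v)) 0)
      (nhdsWithin 0 (Set.Ioi 0)) (nhds ⟪G, v⟫) :=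
    (hasDerivAt_iff_tendsto_slope.mp hd).mono_left
      (nhdsWithin_mono 0 (fun s hs => ne_of_gt hs))
  have hbound : ∀ᶠ t in nhdsWithin (0:ℝ) (Set.Ioi 0),
      slope (fun s : ℝ => f (x + s • v)) 0 t ≤ f y - f x := by
    filter_upwards [Ioo_mem_nhdsGT one_pos] with t ht
    have ht0 : 0 < t := ht.1
    have hcomb : f (x + t • v) ≤ (1 - t) * f x + t * f y := by
      have := hf.2 (Set.mem_univ x) (Set.mem_univ y)
        (by linarith [ht.2] : (0:ℝ) ≤ 1 - t) (le_of_lt ht0) (by ring)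
      have hpt : (1 - t) • x + t • y = x + t • v := by rw [hv]; module
      simpa [hpt, smul_eq_mul] using this
    have hφ0 : f (x + (0:ℝ) • v) = f x := by simp
    rw [slope_def_field, hφ0, sub_zero, div_le_iff₀ ht0]
    nlinarith [hcomb]
  have := le_of_tendsto hslope hbound
  linarith

lemma descent_lemma {f : E → ℝ} {g : E → E} {L : ℝ} (hL : 0 ≤ L)
    (hgrad : ∀ z, HasGradientAt f (g z) z)
    (hlip : ∀ z w, ‖g z - g w‖ ≤ L * ‖z - w‖) (x y : E) :
    f y ≤ f x + ⟪g x, y - x⟫ + L / 2 * ‖y - x‖ ^ 2 := by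
  set v := y - x with hv
  have hcont : Continuous g := by
    have : LipschitzWith (Real.toNNReal L) g := by
      apply LipschitzWith.of_dist_le_mul
      intro z w
      simpa [dist_eq_norm, Real.coe_toNNReal L hL] using hlip z w
    exact this.continuous
  have hderiv : ∀ t : ℝ, HasDerivAt (fun s : ℝ => f (x + s • v)) ⟪g (x + t • v), v⟫ t :=
    fun t => line_hasDerivAt (hgrad _)
  have hφ'cont : Continuous fun t : ℝ => ⟪g (x + t • v), v⟫ :=
    (hcont.comp (continuous_const.add (continuous_id.smul continuous_const))).inner
      continuous_const
  have hftc : ∫ t in (0:ℝ)..1, ⟪g (x + t • v), v⟫ =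
      f (x + (1:ℝ) • v) - f (x + (0:ℝ) • v) :=
    intervalIntegral.integral_eq_sub_of_hasDerivAt (fun t _ => hderiv t)
      (hφ'cont.intervalIntegrable 0 1)
  have hmono : ∫ t in (0:ℝ)..1, ⟪g (x + t • v), v⟫ ≤
      ∫ t in (0:ℝ)..1, (⟪g x, v⟫ + t * (L * ‖v‖ ^ 2)) := by
    apply intervalIntegral.integral_mono_on zero_le_one
      (hφ'cont.intervalIntegrable 0 1)
      (((by continuity : Continuous fun t : ℝ => ⟪g x, v⟫ + t * (L * ‖v‖ ^ 2))).intervalIntegrable 0 1)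
    intro t ht
    have h1 : ⟪g (x + t • v) - g x, v⟫ ≤ ‖g (x + t • v) - g x‖ * ‖v‖ :=
      real_inner_le_norm _ _
    have h2 : ‖g (x + t • v) - g x‖ ≤ L * ‖t • v‖ := by
      simpa using hlip (x + t • v) x
    have h3 : ‖t • v‖ = t * ‖v‖ := by
      rw [norm_smul, Real.norm_eq_abs, abs_of_nonneg ht.1]
    have h4 : ⟪g (x + t • v), v⟫ - ⟪g x, v⟫ = ⟪g (x + t • v) - g x, v⟫ := by
      rw [inner_sub_left]
    have h5 : ‖g (x + t • v) - g x‖ * ‖v‖ ≤ L * (t * ‖v‖) * ‖v‖ := by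
      rw [← h3]
      exact mul_le_mul_of_nonneg_right h2 (norm_nonneg v)
    have h6 : L * (t * ‖v‖) * ‖v‖ = t * (L * ‖v‖ ^ 2) := by ring
    linarith [h1, h4, h5]
  have hint : ∫ t in (0:ℝ)..1, (⟪g x, v⟫ + t * (L * ‖v‖ ^ 2)) =
      ⟪g x, v⟫ + L / 2 * ‖v‖ ^ 2 := by
    rw [intervalIntegral.integral_add intervalIntegrable_const
      (((by continuity : Continuous fun t : ℝ => t * (L * ‖v‖ ^ 2))).intervalIntegrable 0 1),
      intervalIntegral.integral_mul_const, integral_id]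
    simp
    ring
  have hy1 : x + (1:ℝ) • v = y := by rw [hv]; module
  have hy0 : x + (0:ℝ) • v = x := by module
  rw [hy1, hy0] at hftc
  linarith [hftc ▸ hmono, hint ▸ hmono]

lemma normsq_hasGradientAt (c : ℝ) (x : E) :
    HasGradientAt (fun z : E => c / 2 * ‖z‖ ^ 2) (c • x) x := by
  have h0 : HasFDerivAt (fun z : E => ⟪z, z⟫)
      ((fderivInnerCLM ℝ ((x : E), (x : E))).comp
        ((ContinuousLinearMap.id ℝ E).prod (ContinuousLinearMap.id ℝ E))) x :=
    (hasFDerivAt_id x).inner ℝ (hasFDerivAt_id x)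
  have h1 : HasFDerivAt (fun z : E => c / 2 * ⟪z, z⟫)
      ((c / 2) • ((fderivInnerCLM ℝ ((x : E), (x : E))).comp
        ((ContinuousLinearMap.id ℝ E).prod (ContinuousLinearMap.id ℝ E)))) x :=
    h0.const_mul (c / 2)
  have heq : (fun z : E => c / 2 * ⟪z, z⟫) = fun z : E => c / 2 * ‖z‖ ^ 2 := by
    funext z; rw [real_inner_self_eq_norm_sq]
  rw [heq] at h1
  have hEq : (toDual ℝ E) (c • x) =
      (c / 2) • ((fderivInnerCLM ℝ ((x : E), (x : E))).comp
        ((ContinuousLinearMap.id ℝ E).prod (ContinuousLinearMap.id ℝ E))) := by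
    ext w
    simp [toDual_apply_apply, fderivInnerCLM_apply, real_inner_smul_left]
    rw [real_inner_comm]
    ring
  rw [hasGradientAt_iff_hasFDerivAt, hEq]
  exact h1

lemma strong_first_order {f : E → ℝ} {G x : E} {μ : ℝ}
    (hsc : ConvexOn ℝ Set.univ (fun z => f z - μ / 2 * ‖z‖ ^ 2))
    (hx : HasGradientAt f G x) (y : E) :
    f x + ⟪G, y - x⟫ + μ / 2 * ‖y - x‖ ^ 2 ≤ f y := by
  have hnorm := normsq_hasGradientAt μ x
  have hh : HasGradientAt (fun z => f z - μ / 2 * ‖z‖ ^ 2) (G - μ • x) x := by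
    rw [hasGradientAt_iff_hasFDerivAt] at hx hnorm ⊢
    have := HasFDerivAt.fun_sub hx hnorm
    simpa [map_sub] using this
  have key := convex_first_order hsc hh y
  have e1 : ⟪G - μ • x, y - x⟫ = ⟪G, y - x⟫ - μ * ⟪x, y - x⟫ := by
    rw [inner_sub_left, real_inner_smul_left]
  have e2 : ‖y - x‖ ^ 2 = ‖y‖ ^ 2 - 2 * ⟪y, x⟫ + ‖x‖ ^ 2 := norm_sub_sq_real y x
  have e3 : ⟪x, y - x⟫ = ⟪y, x⟫ - ‖x‖ ^ 2 := by
    rw [inner_sub_right, real_inner_comm, real_inner_self_eq_norm_sq]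
  simp only [e1, e3] at key
  rw [e2]
  nlinarith [key]

set_option maxHeartbeats 2000000 in
/-- The deterministic one-step contraction (eq. 'delta rec' in Appendix H):
with `L`-smooth, `μ`-strongly convex local losses, weights `p_n` summing to `1`,
global minimizer `ω*` of `F = Σ_n p_n F_n`, and step size `0 < η < 1/(2L)`,
one full-batch gradient step at each device yields
`‖Σ_n p_n (ω_n − η ∇F_n(ω_n)) − ω*‖² ≤ (1 − μη/2)‖ω̄ − ω*‖²
  + (2η²L² + (L+μ)η) Σ_n p_n ‖ω̄ − ω_n‖²`. -/
theorem one_step_contraction_full_batch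
    {M : ℕ} (hM : 1 ≤ M) {N : ℕ}
    (L μ : ℝ) (hμ : 0 < μ) (hμL : μ ≤ L)
    (F : Fin N → EuclideanSpace ℝ (Fin M) → ℝ)
    (g : Fin N → EuclideanSpace ℝ (Fin M) → EuclideanSpace ℝ (Fin M))
    (hgrad : ∀ n x, HasGradientAt (F n) (g n x) x)
    (hlip : ∀ n x y, ‖g n x - g n y‖ ≤ L * ‖x - y‖)
    (hsc : ∀ n, ConvexOn ℝ Set.univ (fun x => F n x - μ / 2 * ‖x‖ ^ 2))
    (p : Fin N → ℝ) (hp : ∀ n, 0 ≤ p n) (hpsum : ∑ n, p n = 1)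
    (ωstar : EuclideanSpace ℝ (Fin M))
    (hmin : ∀ x, ∑ n, p n * F n ωstar ≤ ∑ n, p n * F n x)
    (ω : Fin N → EuclideanSpace ℝ (Fin M))
    (ωbar : EuclideanSpace ℝ (Fin M)) (hωbar : ωbar = ∑ n, p n • ω n)
    (η : ℝ) (hη0 : 0 < η) (hη : η < 1 / (2 * L)) :
    ‖(∑ n, p n • (ω n - η • g n (ω n))) - ωstar‖ ^ 2 ≤
      (1 - μ * η / 2) * ‖ωbar - ωstar‖ ^ 2 +
        (2 * η ^ 2 * L ^ 2 + (L + μ) * η) * ∑ n, p n * ‖ωbar - ω n‖ ^ 2 := by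
  classical
  have hL : 0 < L := lt_of_lt_of_le hμ hμL
  have h2ηL : 2 * η * L < 1 := by
    have := (lt_div_iff₀ (by positivity : (0:ℝ) < 2 * L)).mp hη
    linarith
  set Fs : EuclideanSpace ℝ (Fin M) → ℝ := fun x => ∑ n, p n * F n x with hFs
  set Gs : EuclideanSpace ℝ (Fin M) → EuclideanSpace ℝ (Fin M) :=
    fun x => ∑ n, p n • g n x with hGs
  -- gradient of the aggregate
  have hGsgrad : ∀ x, HasGradientAt Fs (Gs x) x := by
    intro x
    rw [hasGradientAt_iff_hasFDerivAt]
    have hsum : HasFDerivAt Fs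
        (∑ n, p n • (InnerProductSpace.toDual ℝ _ (g n x))) x := by
      apply HasFDerivAt.fun_sum
      intro n _
      exact (hasGradientAt_iff_hasFDerivAt.mp (hgrad n x)).const_mul (p n)
    have hEq : (InnerProductSpace.toDual ℝ _) (Gs x) =
        ∑ n, p n • (InnerProductSpace.toDual ℝ _ (g n x)) := by
      rw [hGs]
      simp [map_sum]
    rw [hEq]
    exact hsum
  -- Lipschitz bound for the aggregate gradient
  have hGslip : ∀ x y, ‖Gs x - Gs y‖ ≤ L * ‖x - y‖ := by
    intro x y
    have he : Gs x - Gs y = ∑ n, p n • (g n x - g n y) := by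
      rw [hGs]
      simp [← Finset.sum_sub_distrib, smul_sub]
    rw [he]
    calc ‖∑ n, p n • (g n x - g n y)‖ ≤ ∑ n, ‖p n • (g n x - g n y)‖ := norm_sum_le _ _
      _ ≤ ∑ n, p n * (L * ‖x - y‖) := by
          apply Finset.sum_le_sum
          intro n _
          rw [norm_smul, Real.norm_eq_abs, abs_of_nonneg (hp n)]
          exact mul_le_mul_of_nonneg_left (hlip n x y) (hp n)
      _ = L * ‖x - y‖ := by rw [← Finset.sum_mul, hpsum, one_mul]
  -- zero gradient at the minimizer
  have hloc : IsLocalMin Fs ωstar := Filter.Eventually.of_forall fun x => hmin x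
  have hG0 : Gs ωstar = 0 := by
    have h0 := hloc.hasFDerivAt_eq_zero (hasGradientAt_iff_hasFDerivAt.mp (hGsgrad ωstar))
    exact (InnerProductSpace.toDual ℝ _).injective (by rw [h0, map_zero])
  -- co-coercivity at ωbar
  have hcoco : ‖Gs ωbar‖ ^ 2 ≤ 2 * L * (Fs ωbar - Fs ωstar) := by
    have hd := descent_lemma (le_of_lt hL) hGsgrad hGslip ωbar (ωbar - (1/L) • Gs ωbar)
    have he : (ωbar - (1/L) • Gs ωbar) - ωbar = -((1/L) • Gs ωbar) := by module
    rw [he] at hd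
    have h1 : ⟪Gs ωbar, -((1/L) • Gs ωbar)⟫ = -(1/L) * ‖Gs ωbar‖ ^ 2 := by
      rw [inner_neg_right, real_inner_smul_right, real_inner_self_eq_norm_sq]
      ring
    have h2 : ‖-((1/L) • Gs ωbar)‖ ^ 2 = (1/L) ^ 2 * ‖Gs ωbar‖ ^ 2 := by
      rw [norm_neg, norm_smul, Real.norm_eq_abs,
        abs_of_pos (by positivity : (0:ℝ) < 1/L), mul_pow]
    rw [h1, h2] at hd
    have h3 := hmin (ωbar - (1/L) • Gs ωbar)
    have e : -(1/L) * ‖Gs ωbar‖ ^ 2 + L / 2 * ((1/L) ^ 2 * ‖Gs ωbar‖ ^ 2)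
        = -(1/(2*L)) * ‖Gs ωbar‖ ^ 2 := by
      field_simp
      ring
    have key : 1/(2*L) * ‖Gs ωbar‖ ^ 2 ≤ Fs ωbar - Fs ωstar := by
      have h3' : Fs ωstar ≤ Fs (ωbar - (1/L) • Gs ωbar) := h3
      linarith [hd, e]
    have e2 : 2 * L * (1/(2*L) * ‖Gs ωbar‖ ^ 2) = ‖Gs ωbar‖ ^ 2 := by
      field_simp
    have := mul_le_mul_of_nonneg_left key (by positivity : (0:ℝ) ≤ 2*L)
    linarith [e2 ▸ this]
  -- rewrite the iterate
  set gbar : EuclideanSpace ℝ (Fin M) := ∑ n, p n • g n (ω n) with hgbar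
  have hsum0 : (∑ n, p n • (ω n - η • g n (ω n))) - ωstar = (ωbar - ωstar) - η • gbar := by
    have hterm : ∀ n, p n • (ω n - η • g n (ω n)) = p n • ω n - η • (p n • g n (ω n)) := by
      intro n
      rw [smul_sub, smul_comm]
    rw [Finset.sum_congr rfl fun n _ => hterm n, Finset.sum_sub_distrib,
      ← Finset.smul_sum, hωbar, hgbar]
    abel
  set S : ℝ := ∑ n, p n * ‖ωbar - ω n‖ ^ 2 with hS
  set T : ℝ := ∑ n, p n * ‖ω n - ωstar‖ ^ 2 with hT'
  set A : ℝ := ‖ωbar - ωstar‖ ^ 2 with hA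
  -- expansion of the squared norm
  have hexp : ‖(ωbar - ωstar) - η • gbar‖ ^ 2 =
      A - 2 * η * ⟪gbar, ωbar - ωstar⟫ + η ^ 2 * ‖gbar‖ ^ 2 := by
    rw [norm_sub_sq_real, real_inner_smul_right, norm_smul, Real.norm_eq_abs,
      abs_of_pos hη0, mul_pow, real_inner_comm]
    ring
  -- per-device inner product bound
  have hinner : ∀ n, F n ωbar - F n ωstar - L/2 * ‖ωbar - ω n‖ ^ 2
      + μ/2 * ‖ω n - ωstar‖ ^ 2 ≤ ⟪g n (ω n), ωbar - ωstar⟫ := by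
    intro n
    have hdn := descent_lemma (le_of_lt hL) (hgrad n) (hlip n) (ω n) ωbar
    have hsn := strong_first_order (hsc n) (hgrad n (ω n)) ωstar
    have hsplit : ⟪g n (ω n), ωbar - ωstar⟫
        = ⟪g n (ω n), ωbar - ω n⟫ - ⟪g n (ω n), ωstar - ω n⟫ := by
      rw [← inner_sub_right]
      congr 1
      abel
    have hnorm1 : ‖ωstar - ω n‖ = ‖ω n - ωstar‖ := norm_sub_rev _ _
    rw [hnorm1] at hsn
    rw [hsplit]
    linarith [hdn, hsn]
  have hgbar_inner : ⟪gbar, ωbar - ωstar⟫ = ∑ n, p n * ⟪g n (ω n), ωbar - ωstar⟫ := by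
    rw [hgbar, sum_inner]
    exact Finset.sum_congr rfl fun n _ => real_inner_smul_left _ _ _
  have hexp2 : ∑ n, p n * (F n ωbar - F n ωstar - L/2 * ‖ωbar - ω n‖ ^ 2
      + μ/2 * ‖ω n - ωstar‖ ^ 2)
      = (Fs ωbar - Fs ωstar) - L/2 * S + μ/2 * T := by
    rw [hFs, hS, hT']
    simp only
    rw [Finset.mul_sum, Finset.mul_sum]
    rw [← Finset.sum_sub_distrib, ← Finset.sum_sub_distrib, ← Finset.sum_add_distrib]
    exact Finset.sum_congr rfl fun n _ => by ring
  have hC : (Fs ωbar - Fs ωstar) - L/2 * S + μ/2 * T ≤ ⟪gbar, ωbar - ωstar⟫ := by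
    rw [hgbar_inner, ← hexp2]
    exact Finset.sum_le_sum fun n _ => mul_le_mul_of_nonneg_left (hinner n) (hp n)
  -- T lower bound
  have hTlow : A/2 - S ≤ T := by
    have hn : ∀ n, A/2 - ‖ωbar - ω n‖ ^ 2 ≤ ‖ω n - ωstar‖ ^ 2 := by
      intro n
      have tri : ‖ωbar - ωstar‖ ≤ ‖ωbar - ω n‖ + ‖ω n - ωstar‖ := by
        simpa [dist_eq_norm] using dist_triangle ωbar (ω n) ωstar
      rw [hA]
      nlinarith [tri, norm_nonneg (ωbar - ω n), norm_nonneg (ω n - ωstar),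
        norm_nonneg (ωbar - ωstar), sq_nonneg (‖ωbar - ω n‖ - ‖ω n - ωstar‖)]
    have hle := Finset.sum_le_sum fun n (_ : n ∈ Finset.univ) =>
      mul_le_mul_of_nonneg_left (hn n) (hp n)
    have heq : ∑ n, p n * (A/2 - ‖ωbar - ω n‖ ^ 2) = A/2 - S := by
      rw [hS]
      rw [Finset.sum_congr rfl fun n _ => mul_sub (p n) (A/2) (‖ωbar - ω n‖ ^ 2),
        Finset.sum_sub_distrib, ← Finset.sum_mul, hpsum, one_mul]
    rw [hT']
    linarith [heq ▸ hle]
  -- bound on ‖gbar‖²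
  have hdiff : ‖gbar - Gs ωbar‖ ≤ ∑ n, p n * (L * ‖ωbar - ω n‖) := by
    have he : gbar - Gs ωbar = ∑ n, p n • (g n (ω n) - g n ωbar) := by
      rw [hgbar, hGs]
      simp [← Finset.sum_sub_distrib, smul_sub]
    rw [he]
    refine (norm_sum_le _ _).trans (Finset.sum_le_sum fun n _ => ?_)
    rw [norm_smul, Real.norm_eq_abs, abs_of_nonneg (hp n)]
    have h' : ‖g n (ω n) - g n ωbar‖ ≤ L * ‖ωbar - ω n‖ := by
      rw [← norm_sub_rev (ω n) ωbar]
      exact hlip n (ω n) ωbar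
    exact mul_le_mul_of_nonneg_left h' (hp n)
  have hCS : (∑ n, p n * (L * ‖ωbar - ω n‖)) ^ 2 ≤ L ^ 2 * S := by
    have h := Finset.sum_mul_sq_le_sq_mul_sq Finset.univ (fun n => Real.sqrt (p n))
      (fun n => Real.sqrt (p n) * (L * ‖ωbar - ω n‖))
    have e1 : ∀ n, Real.sqrt (p n) * (Real.sqrt (p n) * (L * ‖ωbar - ω n‖))
        = p n * (L * ‖ωbar - ω n‖) := fun n => by
      rw [← mul_assoc, Real.mul_self_sqrt (hp n)]
    have e2 : ∀ n, Real.sqrt (p n) ^ 2 = p n := fun n => Real.sq_sqrt (hp n)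
    have e3 : ∀ n, (Real.sqrt (p n) * (L * ‖ωbar - ω n‖)) ^ 2
        = p n * (L ^ 2 * ‖ωbar - ω n‖ ^ 2) := fun n => by
      rw [mul_pow, Real.sq_sqrt (hp n)]
      ring
    rw [Finset.sum_congr rfl fun n _ => e1 n, Finset.sum_congr rfl fun n _ => e2 n,
      Finset.sum_congr rfl fun n _ => e3 n, hpsum, one_mul] at h
    have e4 : ∑ n, p n * (L ^ 2 * ‖ωbar - ω n‖ ^ 2) = L ^ 2 * S := by
      rw [hS, Finset.mul_sum]
      exact Finset.sum_congr rfl fun n _ => by ring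
    linarith [e4 ▸ h]
  have hgbar_sq : ‖gbar‖ ^ 2 ≤ 2 * L ^ 2 * S + 4 * L * (Fs ωbar - Fs ωstar) := by
    have t1 : ‖gbar‖ ≤ ‖gbar - Gs ωbar‖ + ‖Gs ωbar‖ := by
      calc ‖gbar‖ = ‖(gbar - Gs ωbar) + Gs ωbar‖ := by rw [sub_add_cancel]
        _ ≤ ‖gbar - Gs ωbar‖ + ‖Gs ωbar‖ := norm_add_le _ _
    have t2 : ‖gbar‖ ^ 2 ≤ 2 * ‖gbar - Gs ωbar‖ ^ 2 + 2 * ‖Gs ωbar‖ ^ 2 := by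
      nlinarith [t1, norm_nonneg (gbar - Gs ωbar), norm_nonneg (Gs ωbar), norm_nonneg gbar,
        sq_nonneg (‖gbar - Gs ωbar‖ - ‖Gs ωbar‖)]
    have t3 : ‖gbar - Gs ωbar‖ ^ 2 ≤ L ^ 2 * S := by
      have := pow_le_pow_left₀ (norm_nonneg _) hdiff 2
      linarith [hCS]
    linarith [t2, t3, hcoco]
  -- final combination
  have hD : 0 ≤ Fs ωbar - Fs ωstar := by linarith [hmin ωbar]
  set D : ℝ := Fs ωbar - Fs ωstar with hDdef
  have hC' : D + μ/2 * (A/2 - S) - L/2 * S ≤ ⟪gbar, ωbar - ωstar⟫ := by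
    have := mul_le_mul_of_nonneg_left hTlow (by positivity : (0:ℝ) ≤ μ/2)
    linarith [hC]
  have p1 : 2 * η * (D + μ/2 * (A/2 - S) - L/2 * S) ≤ 2 * η * ⟪gbar, ωbar - ωstar⟫ :=
    mul_le_mul_of_nonneg_left hC' (by positivity)
  have p2 : η ^ 2 * ‖gbar‖ ^ 2 ≤ η ^ 2 * (2 * L ^ 2 * S + 4 * L * D) :=
    mul_le_mul_of_nonneg_left hgbar_sq (by positivity)
  have p3 : (2 * η * (2 * η * L - 1)) * D ≤ 0 :=
    mul_nonpos_of_nonpos_of_nonneg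
      (mul_nonpos_of_nonneg_of_nonpos (by positivity) (by linarith)) hD
  rw [hsum0, hexp]
  nlinarith [p1, p2, p3]
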